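/- Let 0 < q < 1, let a < 0 < b be real, let b₂ ≠ 0, and suppose B(ω) = b₂(ω−a)(ω−b) and c, d are the two roots of B(ω) − (1−q)ω·A(ω) (where A(ω) = a₁ω + a₀ and b₂ − (1−q)a₁ ≠ 0, c, d ≠ 0). Let ϱ(ω) = (qω/a; q)_∞ · (qω/b; q)_∞ / ((ω/c; q)_∞ · (ω/d; q)_∞). If either (α) c and d are non-real complex conjugates, or (β) c and d are real with c < a and d > b, then ϱ(qᵏa) > 0 and ϱ(qᵏb) > 0 for every integer k ≥ 0; consequently every weight of the Jackson measure ϱ(ω)d_qω on [a,b] is positive, i.e. the mass (1−q)qᵏ·b·ϱ(qᵏb) at the point qᵏb and the mass −(1−q)qᵏ·a·ϱ(qᵏa) at the point qᵏa are positive for all k ≥ 0. -/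

import Mathlib

open ComplexOrder

/-- The infinite q-Pochhammer symbol `(x; q)_∞ = ∏_{k=0}^∞ (1 − qᵏx)` over `ℂ`. -/
noncomputable def qPoch (q : ℝ) (x : ℂ) : ℂ :=
  ∏' k : ℕ, (1 - (q : ℂ) ^ k * x)



lemma summable_qlog {q : ℝ} (hq0 : 0 < q) (hq1 : q < 1) (w : ℂ) :
    Summable (fun k : ℕ => Complex.log (1 - (q : ℂ) ^ k * w)) := by
  have hgeo : Summable (fun k : ℕ => (3/2) * ‖w‖ * q ^ k) :=
    (summable_geometric_of_lt_one hq0.le hq1).mul_left _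
  refine Summable.of_norm_bounded_eventually hgeo ?_
  rw [Nat.cofinite_eq_atTop]
  have htend : Filter.Tendsto (fun k : ℕ => q ^ k * ‖w‖) Filter.atTop (nhds 0) := by
    simpa using (tendsto_pow_atTop_nhds_zero_of_lt_one hq0.le hq1).mul_const ‖w‖
  filter_upwards [htend.eventually_le_const (by norm_num : (0:ℝ) < 1/2)] with k hk
  have h1 : ‖-((q : ℂ) ^ k * w)‖ ≤ 1/2 := by
    simpa [norm_mul, norm_pow, abs_of_pos hq0] using hk
  have := Complex.norm_log_one_add_half_le_self h1
  have h2 : (1 : ℂ) + -((q:ℂ)^k * w) = 1 - (q:ℂ)^k * w := by ring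
  rw [h2] at this
  refine this.trans ?_
  simp only [norm_neg, norm_mul, norm_pow, Complex.norm_real, Real.norm_eq_abs,
    abs_of_pos hq0]
  exact le_of_eq (by ring)

lemma qPoch_eq_cexp {q : ℝ} (hq0 : 0 < q) (hq1 : q < 1) (w : ℂ)
    (hw : ∀ k : ℕ, 1 - (q : ℂ) ^ k * w ≠ 0) :
    qPoch q w = Complex.exp (∑' k : ℕ, Complex.log (1 - (q : ℂ) ^ k * w)) := by
  have := Complex.cexp_tsum_eq_tprod (f := fun k => 1 - (q : ℂ) ^ k * w)
    (fun k => hw k) (summable_qlog hq0 hq1 w)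
  exact this.symm

lemma qPoch_multipliable {q : ℝ} (hq0 : 0 < q) (hq1 : q < 1) (w : ℂ)
    (hw : ∀ k : ℕ, 1 - (q : ℂ) ^ k * w ≠ 0) :
    Multipliable (fun k : ℕ => 1 - (q : ℂ) ^ k * w) :=
  Complex.multipliable_of_summable_log (summable_qlog hq0 hq1 w)

lemma one_sub_pow_mul_pos {q : ℝ} (hq0 : 0 < q) (hq1 : q < 1) {x : ℝ} (hx : x < 1) (k : ℕ) :
    0 < 1 - q ^ k * x := by
  rcases le_or_gt x 0 with h | h
  · nlinarith [pow_pos hq0 k]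
  · nlinarith [pow_le_one₀ hq0.le hq1.le (n := k), pow_pos hq0 k]

lemma qPoch_real_pos {q : ℝ} (hq0 : 0 < q) (hq1 : q < 1) {x : ℝ} (hx : x < 1) :
    ∃ r : ℝ, 0 < r ∧ qPoch q ((x : ℝ) : ℂ) = (r : ℂ) := by
  have hpos : ∀ k : ℕ, 0 < 1 - q ^ k * x := one_sub_pow_mul_pos hq0 hq1 hx
  have hcast : ∀ k : ℕ, 1 - (q : ℂ) ^ k * (x : ℂ) = ((1 - q ^ k * x : ℝ) : ℂ) := by
    intro k; push_cast; ring
  have hw : ∀ k : ℕ, 1 - (q : ℂ) ^ k * (x : ℂ) ≠ 0 := by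
    intro k; rw [hcast k]
    exact_mod_cast (hpos k).ne'
  rw [qPoch_eq_cexp hq0 hq1 _ hw]
  have hlog : ∀ k : ℕ, Complex.log (1 - (q : ℂ) ^ k * (x : ℂ))
      = ((Real.log (1 - q ^ k * x) : ℝ) : ℂ) := by
    intro k; rw [hcast k, Complex.ofReal_log (hpos k).le]
  refine ⟨Real.exp (∑' k : ℕ, Real.log (1 - q ^ k * x)), Real.exp_pos _, ?_⟩
  have hsum : (∑' k : ℕ, Complex.log (1 - (q : ℂ) ^ k * (x : ℂ)))
      = ((∑' k : ℕ, Real.log (1 - q ^ k * x) : ℝ) : ℂ) := by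
    rw [Complex.ofReal_tsum]
    exact tsum_congr hlog
  rw [hsum, Complex.ofReal_exp]

lemma qPoch_conj_pos {q : ℝ} (hq0 : 0 < q) (hq1 : q < 1) {c : ℂ} (hc : c.im ≠ 0)
    {ω : ℝ} (hω : ω ≠ 0) :
    ∃ r : ℝ, 0 < r ∧
      qPoch q ((ω : ℂ) / c) * qPoch q ((ω : ℂ) / (starRingEnd ℂ c)) = (r : ℂ) := by
  set w : ℂ := (ω : ℂ) / c with hwdef
  have hc0 : c ≠ 0 := fun h => hc (by simp [h])
  have hns : Complex.normSq c ≠ 0 := (Complex.normSq_pos.mpr hc0).ne'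
  have hwim : w.im ≠ 0 := by
    have hval : w.im = -(ω * c.im) / Complex.normSq c := by
      rw [hwdef, Complex.div_im]
      simp only [Complex.ofReal_re, Complex.ofReal_im, zero_mul, zero_div]
      ring
    rw [hval]
    exact div_ne_zero (neg_ne_zero.mpr (mul_ne_zero hω hc)) hns
  have hw : ∀ k : ℕ, 1 - (q : ℂ) ^ k * w ≠ 0 := by
    intro k
    intro h
    have : (1 - (q : ℂ) ^ k * w).im = 0 := by rw [h]; rfl
    have hqk : ((q : ℂ) ^ k) = ((q ^ k : ℝ) : ℂ) := by push_cast; ring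
    rw [Complex.sub_im, hqk, Complex.mul_im] at this
    simp only [Complex.one_im, Complex.ofReal_re, Complex.ofReal_im, zero_mul, add_zero] at this
    have : q ^ k * w.im = 0 := by linarith
    exact hwim (by
      rcases mul_eq_zero.mp this with h' | h'
      · exact absurd h' (pow_pos hq0 k).ne'
      · exact h')
  have hconj : (ω : ℂ) / (starRingEnd ℂ c) = starRingEnd ℂ w := by
    rw [hwdef, map_div₀, Complex.conj_ofReal]
  have hP := qPoch_eq_cexp hq0 hq1 w hw
  have hPne : qPoch q w ≠ 0 := by rw [hP]; exact Complex.exp_ne_zero _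
  have hmul := qPoch_multipliable hq0 hq1 w hw
  have hmap := (hmul.hasProd.map (starRingEnd ℂ) (Complex.continuous_conj))
  have hconjprod : qPoch q (starRingEnd ℂ w) = starRingEnd ℂ (qPoch q w) := by
    have hfun : (starRingEnd ℂ) ∘ (fun k : ℕ => 1 - (q : ℂ) ^ k * w)
        = fun k : ℕ => 1 - (q : ℂ) ^ k * (starRingEnd ℂ w) := by
      funext k
      simp [map_sub, map_mul, map_pow, Complex.conj_ofReal]
    rw [hfun] at hmap
    exact hmap.tprod_eq
  refine ⟨Complex.normSq (qPoch q w), Complex.normSq_pos.mpr hPne, ?_⟩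
  rw [hconj, hconjprod, Complex.mul_conj]

/-- Let `0 < q < 1`, `a < 0 < b`, `b₂ ≠ 0`, `B(ω) = b₂(ω−a)(ω−b)`, and
let `c, d` be the two (nonzero) roots of `B(ω) − (1−q)ω(a₁ω+a₀)` (with
`b₂ − (1−q)a₁ ≠ 0`).  Let `ϱ(ω) = (qω/a;q)_∞(qω/b;q)_∞/((ω/c;q)_∞(ω/d;q)_∞)`.  If either
(α) `c` and `d` are non-real complex conjugates, or (β) `c` and `d` are real with `c < a`
and `d > b`, then `ϱ(qᵏa) > 0` and `ϱ(qᵏb) > 0` for every `k ≥ 0` (positivity in the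
partial order of `ℂ`, i.e. the values are real and positive); consequently every weight
of the Jackson measure `ϱ(ω)d_qω` on `[a,b]` is positive: the mass `(1−q)qᵏ·b·ϱ(qᵏb)` at
`qᵏb` and the mass `−(1−q)qᵏ·a·ϱ(qᵏa)` at `qᵏa` are positive for all `k ≥ 0`. -/
theorem stmt_12 (q a b b₂ a₁ a₀ : ℝ) (hq0 : 0 < q) (hq1 : q < 1)
    (ha : a < 0) (hb : 0 < b) (hb₂ : b₂ ≠ 0)
    (hlead : (b₂ : ℂ) - (1 - (q : ℂ)) * (a₁ : ℂ) ≠ 0)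
    (c d : ℂ) (hc0 : c ≠ 0) (hd0 : d ≠ 0)
    (B : ℂ → ℂ)
    (hB : ∀ ω : ℂ, B ω = (b₂ : ℂ) * (ω - (a : ℂ)) * (ω - (b : ℂ)))
    (hroots : ∀ ω : ℂ, B ω - (1 - (q : ℂ)) * ω * ((a₁ : ℂ) * ω + (a₀ : ℂ))
      = ((b₂ : ℂ) - (1 - (q : ℂ)) * (a₁ : ℂ)) * (ω - c) * (ω - d))
    (ϱ : ℂ → ℂ)
    (hϱ : ∀ ω : ℂ, ϱ ω =
      qPoch q ((q : ℂ) * ω / (a : ℂ)) * qPoch q ((q : ℂ) * ω / (b : ℂ))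
        / (qPoch q (ω / c) * qPoch q (ω / d)))
    (hcase : (c.im ≠ 0 ∧ d = starRingEnd ℂ c) ∨
      (c.im = 0 ∧ d.im = 0 ∧ c.re < a ∧ b < d.re)) :
    ∀ k : ℕ,
      0 < ϱ ((q ^ k * a : ℝ) : ℂ) ∧
      0 < ϱ ((q ^ k * b : ℝ) : ℂ) ∧
      0 < (((1 - q) * q ^ k * b : ℝ) : ℂ) * ϱ ((q ^ k * b : ℝ) : ℂ) ∧
      0 < -((((1 - q) * q ^ k * a : ℝ)) : ℂ) * ϱ ((q ^ k * a : ℝ) : ℂ) := by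
  intro k
  have ha' : a ≠ 0 := ha.ne
  have hb' : b ≠ 0 := hb.ne'
  have hqk : 0 < q ^ k := pow_pos hq0 k
  have hqk1 : q ^ k ≤ 1 := pow_le_one₀ hq0.le hq1.le
  have hωa : q ^ k * a ≠ 0 := (mul_neg_of_pos_of_neg hqk ha).ne
  have hωb : q ^ k * b ≠ 0 := (mul_pos hqk hb).ne'
  -- numerator positivity for a general real ω with the two size conditions
  have hnum : ∀ t : ℝ, q * t / a < 1 → q * t / b < 1 →
      ∃ r : ℝ, 0 < r ∧
        qPoch q ((q : ℂ) * ((t : ℝ) : ℂ) / ((a : ℝ) : ℂ)) *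
          qPoch q ((q : ℂ) * ((t : ℝ) : ℂ) / ((b : ℝ) : ℂ)) = (r : ℂ) := by
    intro t h1 h2
    obtain ⟨r1, hr1, e1⟩ := qPoch_real_pos hq0 hq1 h1
    obtain ⟨r2, hr2, e2⟩ := qPoch_real_pos hq0 hq1 h2
    refine ⟨r1 * r2, mul_pos hr1 hr2, ?_⟩
    have ca : (q : ℂ) * ((t : ℝ) : ℂ) / ((a : ℝ) : ℂ) = ((q * t / a : ℝ) : ℂ) := by push_cast; ring
    have cb : (q : ℂ) * ((t : ℝ) : ℂ) / ((b : ℝ) : ℂ) = ((q * t / b : ℝ) : ℂ) := by push_cast; ring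
    rw [ca, cb, e1, e2, ← Complex.ofReal_mul]
  -- the four numerator size conditions
  have hna1 : q * (q ^ k * a) / a < 1 := by
    have : q * (q ^ k * a) / a = q ^ (k + 1) := by field_simp; ring
    rw [this]; exact pow_lt_one₀ hq0.le hq1 (Nat.succ_ne_zero k)
  have hna2 : q * (q ^ k * a) / b < 1 := by
    have : q * (q ^ k * a) / b < 0 :=
      div_neg_of_neg_of_pos (mul_neg_of_pos_of_neg hq0 (mul_neg_of_pos_of_neg hqk ha)) hb
    linarith
  have hnb1 : q * (q ^ k * b) / a < 1 := by
    have : q * (q ^ k * b) / a < 0 :=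
      div_neg_of_pos_of_neg (mul_pos hq0 (mul_pos hqk hb)) ha
    linarith
  have hnb2 : q * (q ^ k * b) / b < 1 := by
    have : q * (q ^ k * b) / b = q ^ (k + 1) := by field_simp; ring
    rw [this]; exact pow_lt_one₀ hq0.le hq1 (Nat.succ_ne_zero k)
  -- denominator positivity
  have hdenpos : ∀ t : ℝ, t ≠ 0 →
      (c.im = 0 → t / c.re < 1) → (d.im = 0 → t / d.re < 1) →
      ∃ r : ℝ, 0 < r ∧
        qPoch q (((t : ℝ) : ℂ) / c) * qPoch q (((t : ℝ) : ℂ) / d) = (r : ℂ) := by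
    intro t ht h1 h2
    rcases hcase with ⟨hcim, hdc⟩ | ⟨hcim, hdim, _, _⟩
    · obtain ⟨r, hr, e⟩ := qPoch_conj_pos hq0 hq1 hcim ht
      exact ⟨r, hr, by rw [hdc]; exact e⟩
    · have hceq : c = ((c.re : ℝ) : ℂ) := Complex.ext (by simp) (by simp [hcim])
      have hdeq : d = ((d.re : ℝ) : ℂ) := Complex.ext (by simp) (by simp [hdim])
      obtain ⟨r1, hr1, e1⟩ := qPoch_real_pos hq0 hq1 (h1 hcim)
      obtain ⟨r2, hr2, e2⟩ := qPoch_real_pos hq0 hq1 (h2 hdim)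
      refine ⟨r1 * r2, mul_pos hr1 hr2, ?_⟩
      have cc : ((t : ℝ) : ℂ) / c = ((t / c.re : ℝ) : ℂ) := by
        conv_lhs => rw [hceq]
        push_cast; ring
      have cd : ((t : ℝ) : ℂ) / d = ((t / d.re : ℝ) : ℂ) := by
        conv_lhs => rw [hdeq]
        push_cast; ring
      rw [cc, cd, e1, e2, ← Complex.ofReal_mul]
  -- bounds for the β case
  have hcrneg : c.im = 0 → c.re < a := by
    rcases hcase with ⟨hcim, _⟩ | ⟨_, _, h, _⟩
    · exact fun h => absurd h hcim
    · exact fun _ => h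
  have hdrpos : d.im = 0 → b < d.re := by
    rcases hcase with ⟨hcim, hdc⟩ | ⟨_, _, _, h⟩
    · intro hdim
      exfalso
      apply hcim
      rw [hdc, Complex.conj_im, neg_eq_zero] at hdim
      exact hdim
    · exact fun _ => h
  -- assemble ϱ positivity at ωa and ωb
  have key : ∀ t : ℝ, t ≠ 0 → q * t / a < 1 → q * t / b < 1 →
      (c.im = 0 → t / c.re < 1) → (d.im = 0 → t / d.re < 1) →
      ∃ r : ℝ, 0 < r ∧ ϱ ((t : ℝ) : ℂ) = (r : ℂ) := by
    intro t ht h1 h2 h3 h4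
    obtain ⟨rn, hrn, en⟩ := hnum t h1 h2
    obtain ⟨rd, hrd, ed⟩ := hdenpos t ht h3 h4
    refine ⟨rn / rd, div_pos hrn hrd, ?_⟩
    rw [hϱ, en, ed, ← Complex.ofReal_div]
  have hρa := key (q ^ k * a) hωa hna1 hna2
    (fun hcim => by
      have hcr : c.re < a := hcrneg hcim
      have hcr0 : c.re < 0 := hcr.trans ha
      have h1 : c.re < q ^ k * a := by nlinarith
      rw [div_lt_one_iff]
      exact Or.inr (Or.inr ⟨hcr0, h1⟩))
    (fun hdim => by
      have hdr : b < d.re := hdrpos hdim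
      have : q ^ k * a / d.re < 0 := div_neg_of_neg_of_pos (by nlinarith) (hb.trans hdr)
      linarith)
  have hρb := key (q ^ k * b) hωb hnb1 hnb2
    (fun hcim => by
      have hcr : c.re < a := hcrneg hcim
      have : q ^ k * b / c.re < 0 := div_neg_of_pos_of_neg (by nlinarith) (hcr.trans ha)
      linarith)
    (fun hdim => by
      have hdr : b < d.re := hdrpos hdim
      have h1 : q ^ k * b < d.re := by nlinarith
      exact (div_lt_one (hb.trans hdr)).mpr h1)
  obtain ⟨ta, hta, ea⟩ := hρa
  obtain ⟨tb, htb, eb⟩ := hρb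
  refine ⟨by rw [ea]; exact Complex.zero_lt_real.mpr hta,
    by rw [eb]; exact Complex.zero_lt_real.mpr htb, ?_, ?_⟩
  · rw [eb, ← Complex.ofReal_mul]
    exact Complex.zero_lt_real.mpr
      (mul_pos (mul_pos (mul_pos (by linarith : (0:ℝ) < 1 - q) hqk) hb) htb)
  · rw [ea]
    have : -(((1 - q) * q ^ k * a : ℝ) : ℂ) * (ta : ℂ) = (((-((1 - q) * q ^ k * a)) * ta : ℝ) : ℂ) := by
      push_cast; ring
    rw [this]
    refine Complex.zero_lt_real.mpr ?_
    have h1 : 0 < -((1 - q) * q ^ k * a) := by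
      have := mul_pos (mul_pos (by linarith : (0:ℝ) < 1 - q) hqk) (by linarith : (0:ℝ) < -a)
      nlinarith
    exact mul_pos h1 hta
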